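/- Let r : ℤ → ℝ³ be a discrete centroaffine curve, i.e. det[r_{k−1}, r_k, r_{k+1}] ≠ 0 for all k ∈ ℤ, with edge tangents t_j = r_{j+1} − r_j. If its centroaffine torsion vanishes identically, i.e. det[t_{k−1}, t_k, t_{k+1}] = 0 for all k ∈ ℤ, then the curve is planar: every point r_k lies in the affine plane r_0 + span_ℝ{t_0, t_1}, i.e. r_k − r_0 ∈ span_ℝ{t_0, t_1} for all k ∈ ℤ. -/

import Mathlib

/-- Determinant of the 3×3 matrix with columns `u`, `v`, `w`. -/
noncomputable def det3 (u v w : Fin 3 → ℝ) : ℝ :=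
  (Matrix.transpose (Matrix.of ![u, v, w])).det

lemma det3_ne_iff (u v w : Fin 3 → ℝ) :
    det3 u v w ≠ 0 ↔ LinearIndependent ℝ ![u, v, w] := by
  rw [det3, Matrix.det_transpose, ← isUnit_iff_ne_zero, ← Matrix.isUnit_iff_isUnit_det,
    ← Matrix.linearIndependent_rows_iff_isUnit]
  rfl

lemma mem_span_of_det3 {u v w : Fin 3 → ℝ} (h : det3 u v w = 0)
    (h2 : LinearIndependent ℝ ![v, w]) :
    u ∈ Submodule.span ℝ ({v, w} : Set (Fin 3 → ℝ)) := by
  by_contra h3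
  have hr : Set.range ![v, w] = ({v, w} : Set (Fin 3 → ℝ)) := by
    rw [Matrix.range_cons, Matrix.range_cons_empty]; rw [Set.union_comm, Set.pair_comm]; rfl
  have : LinearIndependent ℝ (Fin.cons u ![v, w] : Fin 3 → Fin 3 → ℝ) := by
    rw [linearIndependent_fin_cons, hr]
    exact ⟨h2, h3⟩
  exact (det3_ne_iff u v w).mpr this h

lemma det3_cyclic (u v w : Fin 3 → ℝ) : det3 u v w = det3 w u v := by
  rw [det3, det3, Matrix.det_transpose, Matrix.det_transpose]; simp [Matrix.det_fin_three]; ring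

lemma det3_sub (a b c : Fin 3 → ℝ) : det3 a (b - a) (c - b) = det3 a b c := by
  rw [det3, det3, Matrix.det_transpose, Matrix.det_transpose]; simp [Matrix.det_fin_three]; ring

/-- A discrete centroaffine curve with identically vanishing centroaffine torsion is
planar: every point lies in the affine plane through `r 0` spanned by `t 0` and `t 1`. -/
theorem planar_of_torsion_zero (r : ℤ → Fin 3 → ℝ) (t : ℤ → Fin 3 → ℝ)
    (ht : ∀ j, t j = r (j + 1) - r j)
    (hnd : ∀ k : ℤ, det3 (r (k - 1)) (r k) (r (k + 1)) ≠ 0)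
    (hτ : ∀ k : ℤ, det3 (t (k - 1)) (t k) (t (k + 1)) = 0) :
    ∀ k : ℤ, r k - r 0 ∈ Submodule.span ℝ ({t 0, t 1} : Set (Fin 3 → ℝ)) := by
  set V := Submodule.span ℝ ({t 0, t 1} : Set (Fin 3 → ℝ)) with hV
  -- pair independence of consecutive tangents
  have hpair : ∀ k : ℤ, LinearIndependent ℝ ![t (k - 1), t k] := by
    intro k
    have h1 : det3 (r (k - 1)) (t (k - 1)) (t k) ≠ 0 := by
      rw [ht, ht]
      have e1 : k - 1 + 1 = k := by ring
      rw [e1, det3_sub]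
      exact hnd k
    have hli : LinearIndependent ℝ ![r (k - 1), t (k - 1), t k] :=
      (det3_ne_iff _ _ _).mp h1
    have := hli.comp ![1, 2] (by
      intro a b hab
      fin_cases a <;> fin_cases b <;> simp_all)
    convert this using 1
    ext i
    fin_cases i <;> rfl
  -- all tangents lie in V
  have htV : ∀ k : ℤ, t k ∈ V ∧ t (k + 1) ∈ V := by
    intro k
    induction k using Int.induction_on with
    | zero =>
      constructor
      · exact Submodule.subset_span (Or.inl rfl)
      · exact Submodule.subset_span (Or.inr rfl)
    | succ k ih =>
      refine ⟨ih.2, ?_⟩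
      have hτ' : det3 (t k) (t (k + 1)) (t (k + 1 + 1)) = 0 := by
        have := hτ (k + 1)
        have e1 : (k : ℤ) + 1 - 1 = k := by ring
        rwa [e1] at this
      have hz : det3 (t (k + 1 + 1)) (t k) (t (k + 1)) = 0 := by
        rw [← det3_cyclic]; exact hτ'
      have hp2 : LinearIndependent ℝ ![t k, t (k + 1)] := by
        have := hpair (k + 1)
        have e1 : (k : ℤ) + 1 - 1 = k := by ring
        rwa [e1] at this
      have hmem := mem_span_of_det3 hz hp2
      have hle : Submodule.span ℝ ({t k, t (k + 1)} : Set (Fin 3 → ℝ)) ≤ V := by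
        rw [Submodule.span_le]
        rintro x (rfl | rfl)
        · exact ih.1
        · exact ih.2
      exact hle hmem
    | pred k ih =>
      have e0 : (-(k : ℤ) - 1 + 1) = -k := by ring
      refine ⟨?_, by rw [e0]; exact ih.1⟩
      have hτ' := hτ (-(k : ℤ))
      have e1 : (-(k : ℤ)) - 1 = -k - 1 := rfl
      have hp2 : LinearIndependent ℝ ![t (-(k : ℤ)), t (-k + 1)] := by
        have := hpair (-(k : ℤ) + 1)
        have e2 : (-(k : ℤ) + 1 - 1) = -k := by ring
        rwa [e2] at this
      have hmem := mem_span_of_det3 hτ' hp2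
      have hle : Submodule.span ℝ ({t (-(k : ℤ)), t (-k + 1)} : Set (Fin 3 → ℝ)) ≤ V := by
        rw [Submodule.span_le]
        rintro x (rfl | rfl)
        · exact ih.1
        · exact ih.2
      exact hle hmem
  -- conclude for points
  intro k
  induction k using Int.induction_on with
  | zero => simp
  | succ k ih =>
    have : r (k + 1) - r 0 = t k + (r k - r 0) := by rw [ht]; abel
    rw [this]
    exact Submodule.add_mem _ (htV k).1 ih
  | pred k ih =>
    have e0 : (-(k : ℤ) - 1 + 1) = -k := by ring
    have : r (-(k : ℤ) - 1) - r 0 = (r (-k) - r 0) - t (-k - 1) := by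
      rw [ht, e0]; abel
    rw [this]
    exact Submodule.sub_mem _ ih (htV (-(k : ℤ) - 1)).1
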